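/- Let H ≤ F_p^× be a multiplicative subgroup, μ = μ_H the uniform measure on H, ν_k the k-fold convolution of μ∗μ⁻. Then for all ξ ∈ F_p, ν̂_k(ξ)^{4k} ≤ ∑_{x∈F_p} ν̂_k(xξ)² ν_k(x). -/

import Mathlib

open Finset Complex
open scoped Classical BigOperators Pointwise

/-- The additive character `x ↦ e^{2πix/p}` on `ZMod p`. -/
noncomputable def ePsi (p : ℕ) (x : ZMod p) : ℂ :=
  Complex.exp (2 * Real.pi * Complex.I * (x.val : ℂ) / (p : ℂ))

/-- Fourier transform of a (real) measure on `ZMod p`. -/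
noncomputable def ft (p : ℕ) [NeZero p] (μ : ZMod p → ℝ) (ξ : ZMod p) : ℂ :=
  ∑ x : ZMod p, (μ x : ℂ) * ePsi p (x * ξ)

/-- Convolution of two functions on `ZMod p`. -/
noncomputable def cnv (p : ℕ) [NeZero p] (f g : ZMod p → ℝ) (x : ZMod p) : ℝ :=
  ∑ y : ZMod p, f y * g (x - y)

/-- `φ(x) = p · (μ ∗ μ⁻)(x)`. -/
noncomputable def phiF (p : ℕ) [NeZero p] (μ : ZMod p → ℝ) (x : ZMod p) : ℝ :=
  (p : ℝ) * cnv p μ (fun y => μ (-y)) x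

/-- `k`-fold convolution of `f` (0-fold is the Dirac mass at 0). -/
noncomputable def convIter (p : ℕ) [NeZero p] (f : ZMod p → ℝ) : ℕ → ZMod p → ℝ
  | 0 => fun x => if x = 0 then 1 else 0
  | n + 1 => cnv p f (convIter p f n)

/-- `ν_k`, the `k`-fold convolution of `ν = μ ∗ μ⁻`. -/
noncomputable def nuk (p : ℕ) [NeZero p] (μ : ZMod p → ℝ) (k : ℕ) : ZMod p → ℝ :=
  convIter p (cnv p μ (fun y => μ (-y))) k

/-- `Λ_δ`, the set of large Fourier coefficients. -/
noncomputable def Lam (p : ℕ) [NeZero p] (μ : ZMod p → ℝ) (δ : ℝ) : Finset (ZMod p) :=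
  Finset.univ.filter (fun ξ => (p : ℝ) ^ (-δ) < ‖ft p μ ξ‖)

noncomputable def omg (p : ℕ) : ℂ := Complex.exp (2 * Real.pi * Complex.I / (p : ℂ))

lemma ePsi_eq (p : ℕ) (x : ZMod p) : ePsi p x = omg p ^ (x.val) := by
  rw [ePsi, omg, ← Complex.exp_nat_mul]
  ring_nf

lemma omg_pow_p (p : ℕ) [NeZero p] : omg p ^ p = 1 := by
  rw [omg, ← Complex.exp_nat_mul]
  rw [show (p:ℂ) * (2 * Real.pi * Complex.I / (p:ℂ)) = 2 * Real.pi * Complex.I from by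
    field_simp
    exact div_self (Nat.cast_ne_zero.mpr (NeZero.ne p))]
  exact Complex.exp_two_pi_mul_I

lemma ePsi_natCast (p : ℕ) [NeZero p] (n : ℕ) : ePsi p ((n : ZMod p)) = omg p ^ n := by
  rw [ePsi_eq, ZMod.val_natCast]
  conv_rhs => rw [← Nat.div_add_mod n p]
  rw [pow_add, pow_mul, omg_pow_p, one_pow, one_mul]

lemma ePsi_add (p : ℕ) [NeZero p] (a b : ZMod p) :
    ePsi p (a + b) = ePsi p a * ePsi p b := by
  have h : a + b = ((a.val + b.val : ℕ) : ZMod p) := by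
    push_cast [ZMod.natCast_val, ZMod.cast_id]; ring
  rw [h, ePsi_natCast, pow_add, ePsi_eq, ePsi_eq]

lemma ePsi_zero (p : ℕ) : ePsi p 0 = 1 := by
  simp [ePsi]

lemma abs_ePsi (p : ℕ) (x : ZMod p) : ‖ePsi p x‖ = 1 := by
  have h : (2 * (Real.pi:ℂ) * Complex.I * (x.val : ℂ) / (p : ℂ))
      = ((2 * Real.pi * (x.val : ℝ) / (p:ℝ) : ℝ) : ℂ) * Complex.I := by
    push_cast; ring
  rw [ePsi, h, Complex.norm_exp_ofReal_mul_I]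

lemma ePsi_neg (p : ℕ) [NeZero p] (x : ZMod p) : ePsi p (-x) = (ePsi p x)⁻¹ := by
  have := ePsi_add p x (-x)
  rw [add_neg_cancel, ePsi_zero] at this
  exact eq_inv_of_mul_eq_one_left (by rw [mul_comm]; exact this.symm)

lemma conj_ePsi (p : ℕ) [NeZero p] (x : ZMod p) :
    (starRingEnd ℂ) (ePsi p x) = ePsi p (-x) := by
  rw [ePsi_neg, Complex.inv_def, Complex.normSq_eq_norm_sq, abs_ePsi]
  simp

lemma ft_cnv (p : ℕ) [NeZero p] (f g : ZMod p → ℝ) (ξ : ZMod p) :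
    ft p (cnv p f g) ξ = ft p f ξ * ft p g ξ := by
  have inner : ∀ y : ZMod p, ∑ x : ZMod p, (f y : ℂ) * (g (x - y) : ℂ) * ePsi p (x * ξ)
      = ((f y : ℂ) * ePsi p (y * ξ)) * ∑ z : ZMod p, (g z : ℂ) * ePsi p (z * ξ) := by
    intro y
    rw [Finset.mul_sum]
    apply Fintype.sum_equiv (Equiv.subRight y)
    intro x
    simp only [Equiv.subRight_apply]
    rw [show x * ξ = y * ξ + (x - y) * ξ from by ring, ePsi_add]
    ring
  unfold ft cnv
  push_cast
  calc ∑ x : ZMod p, (∑ y : ZMod p, (f y : ℂ) * (g (x - y) : ℂ)) * ePsi p (x * ξ)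
      = ∑ x : ZMod p, ∑ y : ZMod p, (f y : ℂ) * (g (x - y) : ℂ) * ePsi p (x * ξ) :=
        Finset.sum_congr rfl fun x _ => by rw [Finset.sum_mul]
    _ = ∑ y : ZMod p, ∑ x : ZMod p, (f y : ℂ) * (g (x - y) : ℂ) * ePsi p (x * ξ) :=
        Finset.sum_comm
    _ = ∑ y : ZMod p, ((f y : ℂ) * ePsi p (y * ξ)) * ∑ z : ZMod p, (g z : ℂ) * ePsi p (z * ξ) :=
        Finset.sum_congr rfl fun y _ => inner y
    _ = _ := by rw [← Finset.sum_mul]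

lemma ft_delta (p : ℕ) [NeZero p] (ξ : ZMod p) :
    ft p (fun x => if x = 0 then (1:ℝ) else 0) ξ = 1 := by
  unfold ft
  rw [Finset.sum_eq_single 0]
  · simp [ePsi_zero]
  · intro b _ hb; simp [hb]
  · simp

lemma sum_cnv (p : ℕ) [NeZero p] (f g : ZMod p → ℝ) :
    ∑ x : ZMod p, cnv p f g x = (∑ x : ZMod p, f x) * (∑ x : ZMod p, g x) := by
  unfold cnv
  rw [Finset.sum_comm, Finset.sum_mul]
  refine Finset.sum_congr rfl fun y _ => ?_
  rw [← Finset.mul_sum]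
  congr 1
  apply Fintype.sum_equiv (Equiv.subRight y)
  intro z
  simp

lemma cnv_nonneg (p : ℕ) [NeZero p] {f g : ZMod p → ℝ} (hf : ∀ x, 0 ≤ f x)
    (hg : ∀ x, 0 ≤ g x) (x : ZMod p) : 0 ≤ cnv p f g x :=
  Finset.sum_nonneg fun y _ => mul_nonneg (hf y) (hg _)

lemma ft_neg (p : ℕ) [NeZero p] (f : ZMod p → ℝ) (ξ : ZMod p) :
    ft p (fun y => f (-y)) ξ = (starRingEnd ℂ) (ft p f ξ) := by
  unfold ft
  rw [map_sum]
  apply Fintype.sum_equiv (Equiv.neg (ZMod p))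
  intro x
  simp only [Equiv.neg_apply, neg_neg, map_mul, Complex.conj_ofReal, conj_ePsi, neg_mul]

lemma ft_convIter (p : ℕ) [NeZero p] (f : ZMod p → ℝ) (n : ℕ) (ξ : ZMod p) :
    ft p (convIter p f n) ξ = (ft p f ξ) ^ n := by
  induction n with
  | zero =>
    rw [pow_zero, convIter]
    exact ft_delta p ξ
  | succ n ih =>
    rw [convIter, ft_cnv, ih, pow_succ]
    ring

lemma ft_nuk (p : ℕ) [NeZero p] (μ : ZMod p → ℝ) (k : ℕ) (ξ : ZMod p) :
    ft p (nuk p μ k) ξ = ((‖ft p μ ξ‖ ^ 2 : ℝ) : ℂ) ^ k := by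
  rw [nuk, ft_convIter, ft_cnv, ft_neg]
  congr 1
  rw [Complex.mul_conj']
  push_cast
  rfl

lemma sum_convIter (p : ℕ) [NeZero p] {f : ZMod p → ℝ} (hf : ∑ x : ZMod p, f x = 1) (n : ℕ) :
    ∑ x : ZMod p, convIter p f n x = 1 := by
  induction n with
  | zero => simp [convIter]
  | succ n ih => rw [convIter, sum_cnv, hf, ih, one_mul]

lemma convIter_nonneg (p : ℕ) [NeZero p] {f : ZMod p → ℝ} (hf : ∀ x, 0 ≤ f x) (n : ℕ)
    (x : ZMod p) : 0 ≤ convIter p f n x := by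
  induction n generalizing x with
  | zero => rw [convIter]; positivity
  | succ n ih => exact cnv_nonneg p hf (fun y => ih y) x

section Main
variable (p : ℕ) [Fact p.Prime] (H : Subgroup (ZMod p)ˣ) (μ : ZMod p → ℝ)
  (hμ : ∀ x, μ x = if ∃ u ∈ H, ((u : (ZMod p)ˣ) : ZMod p) = x
      then 1 / (Nat.card H : ℝ) else 0)

include hμ

lemma mu_nonneg : ∀ x, 0 ≤ μ x := by
  intro x; rw [hμ]; positivity

lemma mu_sum : ∑ x : ZMod p, μ x = 1 := by
  have hcard : (Finset.univ.filter fun x : ZMod p =>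
      ∃ u ∈ H, ((u : (ZMod p)ˣ) : ZMod p) = x).card = Nat.card H := by
    have himg : (Finset.univ.filter fun x : ZMod p =>
        ∃ u ∈ H, ((u : (ZMod p)ˣ) : ZMod p) = x)
        = Finset.image (fun u : H => ((u : (ZMod p)ˣ) : ZMod p)) Finset.univ := by
      ext x
      simp [eq_comm]
    rw [himg, Finset.card_image_of_injective _ (fun a b h => Subtype.ext (Units.ext h)),
      Finset.card_univ, Nat.card_eq_fintype_card]
  have hne : (Nat.card H : ℝ) ≠ 0 := by
    have : 0 < Nat.card H := Nat.card_pos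
    positivity
  calc ∑ x : ZMod p, μ x
      = ∑ x : ZMod p, (if ∃ u ∈ H, ((u : (ZMod p)ˣ) : ZMod p) = x
          then 1 / (Nat.card H : ℝ) else 0) := Finset.sum_congr rfl fun x _ => hμ x
    _ = (Nat.card H : ℝ) * (1 / (Nat.card H : ℝ)) := by
        rw [Finset.sum_ite, Finset.sum_const, Finset.sum_const_zero, add_zero, hcard,
          nsmul_eq_mul]
    _ = 1 := by field_simp

lemma mu_smul_invariant (u : (ZMod p)ˣ) (hu : u ∈ H) (x : ZMod p) :
    μ ((u : ZMod p) * x) = μ x := by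
  rw [hμ, hμ]
  have hiff : (∃ v ∈ H, ((v : (ZMod p)ˣ) : ZMod p) = (u : ZMod p) * x)
      ↔ (∃ v ∈ H, ((v : (ZMod p)ˣ) : ZMod p) = x) := by
    constructor
    · rintro ⟨v, hv, he⟩
      refine ⟨u⁻¹ * v, H.mul_mem (H.inv_mem hu) hv, ?_⟩
      rw [Units.val_mul, he]
      rw [Units.val_inv_eq_inv_val]
      field_simp
    · rintro ⟨v, hv, he⟩
      exact ⟨u * v, H.mul_mem hu hv, by rw [Units.val_mul, he]⟩
  rw [if_congr hiff rfl rfl]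

lemma ft_mu_invariant (u : (ZMod p)ˣ) (hu : u ∈ H) (ξ : ZMod p) :
    ft p μ ((u : ZMod p) * ξ) = ft p μ ξ := by
  unfold ft
  apply Fintype.sum_equiv (Equiv.mulLeft₀ (u : ZMod p) u.ne_zero)
  intro x
  simp only [Equiv.mulLeft₀_apply]
  rw [mu_smul_invariant p H μ hμ u hu x,
    show x * ((u : ZMod p) * ξ) = (u : ZMod p) * x * ξ from by ring]

end Main

theorem stmt14 (p : ℕ) [Fact p.Prime] (H : Subgroup (ZMod p)ˣ)
    (μ : ZMod p → ℝ)
    (hμ : ∀ x, μ x = if ∃ u ∈ H, ((u : (ZMod p)ˣ) : ZMod p) = x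
        then 1 / (Nat.card H : ℝ) else 0)
    (k : ℕ) (hk : 1 ≤ k) :
    ∀ ξ : ZMod p,
      ‖ft p (nuk p μ k) ξ‖ ^ (4 * k)
        ≤ ∑ x : ZMod p, ‖ft p (nuk p μ k) (x * ξ)‖ ^ 2 * nuk p μ k x := by
  intro ξ
  set F : ZMod p → ℝ := fun η => ‖ft p μ η‖ with hF
  set ν : ZMod p → ℝ := nuk p μ k with hν
  have hF0 : ∀ η, 0 ≤ F η := fun η => (norm_nonneg _)
  -- ft of nuk as a real cast
  have hreal : ∀ η, ft p (nuk p μ k) η = ((F η ^ (2 * k) : ℝ) : ℂ) := by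
    intro η
    rw [ft_nuk]
    push_cast
    rw [← pow_mul]
  have habs : ∀ η, ‖ft p (nuk p μ k) η‖ = F η ^ (2 * k) := by
    intro η
    rw [hreal η, Complex.norm_of_nonneg (by positivity)]
  -- ν is a probability measure
  have hν0 : ∀ x, 0 ≤ ν x := by
    intro x
    exact convIter_nonneg p (cnv_nonneg p (mu_nonneg p H μ hμ)
      (fun y => mu_nonneg p H μ hμ (-y))) k x
  have hν1 : ∑ x : ZMod p, ν x = 1 := by
    rw [hν, nuk]
    apply sum_convIter
    rw [sum_cnv]
    have h1 : ∑ x : ZMod p, μ (-x) = ∑ x : ZMod p, μ x :=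
      Fintype.sum_equiv (Equiv.neg (ZMod p)) _ _ (fun x => by simp)
    rw [h1, mu_sum p H μ hμ, one_mul]
  -- key identity
  have key : ((F ξ ^ (2 * k) : ℝ) : ℂ) = ∑ x : ZMod p, (ν x : ℂ) * ft p μ (x * ξ) := by
    have swap : ∑ x : ZMod p, (ν x : ℂ) * ft p μ (x * ξ)
        = ∑ h : ZMod p, (μ h : ℂ) * ft p (nuk p μ k) (h * ξ) := by
      calc ∑ x : ZMod p, (ν x : ℂ) * ft p μ (x * ξ)
          = ∑ x : ZMod p, ∑ h : ZMod p, (ν x : ℂ) * ((μ h : ℂ) * ePsi p (h * (x * ξ))) := by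
            refine Finset.sum_congr rfl fun x _ => ?_
            rw [ft, Finset.mul_sum]
        _ = ∑ h : ZMod p, ∑ x : ZMod p, (ν x : ℂ) * ((μ h : ℂ) * ePsi p (h * (x * ξ))) :=
            Finset.sum_comm
        _ = ∑ h : ZMod p, (μ h : ℂ) * ft p (nuk p μ k) (h * ξ) := by
            refine Finset.sum_congr rfl fun h _ => ?_
            rw [ft, Finset.mul_sum]
            refine Finset.sum_congr rfl fun x _ => ?_
            rw [show h * (x * ξ) = x * (h * ξ) from by ring]
            ring
    rw [swap]
    have hterm : ∀ h : ZMod p, (μ h : ℂ) * ft p (nuk p μ k) (h * ξ)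
        = (μ h : ℂ) * ((F ξ ^ (2 * k) : ℝ) : ℂ) := by
      intro h
      by_cases hz : μ h = 0
      · rw [hz]; simp
      · obtain ⟨u, hu, hux⟩ : ∃ u ∈ H, ((u : (ZMod p)ˣ) : ZMod p) = h := by
          by_contra hc
          rw [hμ h, if_neg hc] at hz
          exact hz rfl
        rw [hreal (h * ξ)]
        congr 3
        rw [hF]
        simp only
        rw [← hux, ft_mu_invariant p H μ hμ u hu ξ]
    rw [Finset.sum_congr rfl fun h _ => hterm h, ← Finset.sum_mul]
    rw [show ∑ h : ZMod p, ((μ h : ℝ) : ℂ) = ((∑ h : ZMod p, μ h : ℝ) : ℂ) from by push_cast; rfl]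
    rw [mu_sum p H μ hμ]
    simp
  -- key inequality
  have keyineq : F ξ ^ (2 * k) ≤ ∑ x : ZMod p, ν x * F (x * ξ) := by
    have h1 : F ξ ^ (2 * k) = ‖((F ξ ^ (2 * k) : ℝ) : ℂ)‖ := by
      rw [Complex.norm_of_nonneg (by positivity)]
    rw [h1, key]
    refine le_trans (norm_sum_le _ _) (le_of_eq ?_)
    refine Finset.sum_congr rfl fun x _ => ?_
    rw [norm_mul, Complex.norm_of_nonneg (hν0 x)]
  -- Jensen
  have jensen : (∑ x : ZMod p, ν x * F (x * ξ)) ^ (4 * k)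
      ≤ ∑ x : ZMod p, ν x * F (x * ξ) ^ (4 * k) := by
    have hconv : ConvexOn ℝ (Set.Ici (0:ℝ)) (fun t : ℝ => t ^ (4 * k)) := convexOn_pow (4 * k)
    have := hconv.map_sum_le (t := Finset.univ) (w := ν) (p := fun x => F (x * ξ))
      (fun i _ => hν0 i) hν1 (fun i _ => Set.mem_Ici.mpr (hF0 _))
    simpa [smul_eq_mul] using this
  calc ‖ft p (nuk p μ k) ξ‖ ^ (4 * k)
      = (F ξ ^ (2 * k)) ^ (4 * k) := by rw [habs]
    _ ≤ (∑ x : ZMod p, ν x * F (x * ξ)) ^ (4 * k) := by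
        exact pow_le_pow_left₀ (by positivity) keyineq (4 * k)
    _ ≤ ∑ x : ZMod p, ν x * F (x * ξ) ^ (4 * k) := jensen
    _ = ∑ x : ZMod p, ‖ft p (nuk p μ k) (x * ξ)‖ ^ 2 * nuk p μ k x := by
        refine Finset.sum_congr rfl fun x _ => ?_
        rw [habs (x * ξ), ← pow_mul, ← hν]
        rw [show 2 * k * 2 = 4 * k from by ring]
        ring
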